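/- Let L be a first-order language and let M be a countable L-structure. If the group Aut(M) of automorphisms of M (the group of L-equivalences M ≃[L] M under composition) is isomorphic as a group to a free group FreeGroup ι for some index type ι, then Aut(M) is countable. In particular, the automorphism group of a countable structure cannot be an uncountable free group. -/

import Mathlib

open FirstOrder

/-- The group of automorphisms of an `L`-structure `M`, i.e. the `L`-equivalences
`M ≃[L] M` under composition. -/
instance languageEquivGroup (L : FirstOrder.Language) (M : Type*) [L.Structure M] :
    Group (M ≃[L] M) where
  mul f g := f.comp g
  one := FirstOrder.Language.Equiv.refl L M
  inv := FirstOrder.Language.Equiv.symm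
  mul_assoc _ _ _ := rfl
  one_mul := FirstOrder.Language.Equiv.refl_comp
  mul_one := FirstOrder.Language.Equiv.comp_refl
  inv_mul_cancel := FirstOrder.Language.Equiv.symm_comp_self

namespace AutFreeAux

open FirstOrder FirstOrder.Language

variable {L : FirstOrder.Language} {M : Type*} [L.Structure M]

lemma mul_apply (f g : M ≃[L] M) (x : M) : (f * g) x = f (g x) := rfl

lemma one_apply (x : M) : (1 : M ≃[L] M) x = x := rfl

lemma inv_apply_apply (f : M ≃[L] M) (x : M) : f⁻¹ (f x) = x :=
  FirstOrder.Language.Equiv.symm_apply_apply f x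

lemma apply_inv_apply (f : M ≃[L] M) (x : M) : f (f⁻¹ x) = x :=
  FirstOrder.Language.Equiv.apply_symm_apply f x

lemma fix_inv {f : M ≃[L] M} {x : M} (h : f x = x) : f⁻¹ x = x := by
  conv_lhs => rw [← h]
  exact inv_apply_apply f x

lemma mul_inv_apply (a b : M ≃[L] M) (x : M) : (a * b)⁻¹ x = b⁻¹ (a⁻¹ x) := by
  rw [mul_inv_rev]; rfl

lemma pow3_apply (u : M ≃[L] M) (x : M) : (u ^ 3) x = u (u (u x)) := by
  rw [pow_three']
  rfl

lemma pow3_agree {u v : M ≃[L] M} {x : M} (h0 : u x = v x) (h1 : u (v x) = v (v x))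
    (h2 : u (v (v x)) = v (v (v x))) : (u ^ 3) x = (v ^ 3) x := by
  rw [pow3_apply, pow3_apply, h0, h1, h2]

/-- Truncated nested products: `W g d n = g n * (g (n+1) * (⋯)^3)^3` of depth `d`. -/
def W (g : ℕ → (M ≃[L] M)) : ℕ → ℕ → (M ≃[L] M)
  | 0, _ => 1
  | d+1, n => g n * (W g d (n+1)) ^ 3

/-- As `W` but with innermost `1` replaced by `h`. -/
def Wm (g : ℕ → (M ≃[L] M)) : ℕ → ℕ → (M ≃[L] M) → (M ≃[L] M)
  | 0, _, h => h
  | d+1, n, h => g n * (Wm g d (n+1) h) ^ 3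

lemma W_succ_eq_Wm (g : ℕ → (M ≃[L] M)) :
    ∀ d n, W g (d+1) n = Wm g d n (g (n + d)) := by
  intro d
  induction d with
  | zero => intro n; simp [W, Wm]
  | succ d ih =>
    intro n
    show g n * (W g (d+1) (n+1)) ^ 3 = g n * (Wm g d (n+1) (g (n + (d+1)))) ^ 3
    have hnd : n + (d+1) = (n+1) + d := by omega
    rw [ih (n+1), hnd]

lemma W_congr {g g' : ℕ → (M ≃[L] M)} :
    ∀ d n, (∀ k, n ≤ k → k < n + d → g k = g' k) → W g d n = W g' d n := by
  intro d
  induction d with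
  | zero => intro n _; rfl
  | succ d ih =>
    intro n h
    show g n * (W g d (n+1)) ^ 3 = g' n * (W g' d (n+1)) ^ 3
    rw [h n le_rfl (by omega), ih (n+1) (fun k hk hk' => h k (by omega) (by omega))]

lemma Wm_congr {g g' : ℕ → (M ≃[L] M)} :
    ∀ d n h₀, (∀ k, n ≤ k → k < n + d → g k = g' k) → Wm g d n h₀ = Wm g' d n h₀ := by
  intro d
  induction d with
  | zero => intro n h₀ _; rfl
  | succ d ih =>
    intro n h₀ h
    show g n * (Wm g d (n+1) h₀) ^ 3 = g' n * (Wm g' d (n+1) h₀) ^ 3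
    rw [h n le_rfl (by omega), ih (n+1) h₀ (fun k hk hk' => h k (by omega) (by omega))]

open Classical in
/-- Core approximation lemma: perturbing the innermost element of the nested product
by something fixing a suitably large finite set does not change values on `F'`. -/
lemma lemC (g : ℕ → (M ≃[L] M)) :
    ∀ (d n : ℕ) (F' : Finset M), ∃ F : Finset M,
      ∀ h : (M ≃[L] M), (∀ x ∈ F, h x = x) →
        ∀ x ∈ F', Wm g d n h x = W g d n x ∧ (Wm g d n h)⁻¹ x = (W g d n)⁻¹ x := by
  intro d
  induction d with
  | zero =>
    intro n F'
    refine ⟨F', fun h hh x hx => ⟨?_, ?_⟩⟩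
    · exact (hh x hx).trans (one_apply x).symm
    · show h⁻¹ x = (1 : M ≃[L] M)⁻¹ x
      rw [inv_one, one_apply, fix_inv (hh x hx)]
  | succ d ih =>
    intro n F'
    set v := W g d (n+1) with hv
    classical
    set E : Finset M := F'.biUnion (fun x =>
      {x, v x, v (v x), (g n)⁻¹ x, v⁻¹ ((g n)⁻¹ x), v⁻¹ (v⁻¹ ((g n)⁻¹ x))}) with hE
    obtain ⟨F, hF⟩ := ih (n+1) E
    refine ⟨F, fun h hh x hx => ?_⟩
    have memE : ∀ y ∈ ({x, v x, v (v x), (g n)⁻¹ x, v⁻¹ ((g n)⁻¹ x),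
        v⁻¹ (v⁻¹ ((g n)⁻¹ x))} : Finset M), y ∈ E := by
      intro y hy
      exact Finset.mem_biUnion.2 ⟨x, hx, hy⟩
    have hu := hF h hh
    set u := Wm g d (n+1) h with hu'
    have e1 : u x = v x := (hu x (memE x (by simp))).1
    have e2 : u (v x) = v (v x) := (hu (v x) (memE (v x) (by simp))).1
    have e3 : u (v (v x)) = v (v (v x)) := (hu (v (v x)) (memE (v (v x)) (by simp))).1
    have f1 : u⁻¹ ((g n)⁻¹ x) = v⁻¹ ((g n)⁻¹ x) :=
      (hu ((g n)⁻¹ x) (memE _ (by simp))).2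
    have f2 : u⁻¹ (v⁻¹ ((g n)⁻¹ x)) = v⁻¹ (v⁻¹ ((g n)⁻¹ x)) :=
      (hu (v⁻¹ ((g n)⁻¹ x)) (memE _ (by simp))).2
    have f3 : u⁻¹ (v⁻¹ (v⁻¹ ((g n)⁻¹ x))) = v⁻¹ (v⁻¹ (v⁻¹ ((g n)⁻¹ x))) :=
      (hu (v⁻¹ (v⁻¹ ((g n)⁻¹ x))) (memE _ (by simp))).2
    constructor
    · show (g n * u ^ 3) x = (g n * v ^ 3) x
      rw [mul_apply, mul_apply, pow3_agree e1 e2 e3]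
    · show (g n * u ^ 3)⁻¹ x = (g n * v ^ 3)⁻¹ x
      rw [mul_inv_apply, mul_inv_apply, ← inv_pow, ← inv_pow,
        pow3_agree f1 f2 f3]


/-- Requirement sets for the recursive construction. -/
noncomputable def REQ (g : ℕ → (M ≃[L] M)) (Bm : Finset M) (m : ℕ) : Finset M :=
  letI := Classical.decEq M
  (Finset.range (m+1)).biUnion fun n => (lemC g (m - n) n Bm).choose

lemma mem_REQ {g : ℕ → (M ≃[L] M)} {Bm : Finset M} {m n : ℕ} {y : M}
    (hn : n ≤ m) (hy : y ∈ (lemC g (m - n) n Bm).choose) : y ∈ REQ g Bm m := by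
  classical
  unfold REQ
  rw [Finset.mem_biUnion]
  exact ⟨n, Finset.mem_range.2 (Nat.lt_succ_of_le hn), hy⟩

/-- The recursively constructed sequence of automorphisms. -/
noncomputable def seq (pick : Finset M → (M ≃[L] M)) (B : ℕ → Finset M) : ℕ → (M ≃[L] M)
  | m => pick (REQ (fun k => if h : k < m then seq pick B k else 1) (B m) m)
termination_by m => m
decreasing_by exact h

lemma seq_eq (pick : Finset M → (M ≃[L] M)) (B : ℕ → Finset M) (m : ℕ) :
    seq pick B m = pick (REQ (fun k => if h : k < m then seq pick B k else 1) (B m) m) := by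
  rw [seq]

lemma stage {pick : Finset M → (M ≃[L] M)} {B : ℕ → Finset M}
    (hpick : ∀ F : Finset M, ∀ x ∈ F, pick F x = x) (m n : ℕ) (hn : n ≤ m)
    (x : M) (hx : x ∈ B m) :
    W (seq pick B) (m - n + 1) n x = W (seq pick B) (m - n) n x ∧
      (W (seq pick B) (m - n + 1) n)⁻¹ x = (W (seq pick B) (m - n) n)⁻¹ x := by
  set g := seq pick B with hg
  set g' : ℕ → (M ≃[L] M) := fun k => if h : k < m then g k else 1 with hg'
  have hcong : ∀ k, n ≤ k → k < n + (m - n) → g' k = g k := by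
    intro k hk hk'
    have hkm : k < m := by omega
    simp [hg', hkm]
  have hWc : W g' (m - n) n = W g (m - n) n := W_congr _ _ hcong
  have hWmc : Wm g' (m - n) n (g m) = Wm g (m - n) n (g m) := Wm_congr _ _ _ hcong
  have hseq : g m = pick (REQ g' (B m) m) := seq_eq pick B m
  have hfix : ∀ y ∈ (lemC g' (m - n) n (B m)).choose, g m y = y := by
    intro y hy
    rw [hseq]
    exact hpick _ y (mem_REQ hn hy)
  have hspec := (lemC g' (m - n) n (B m)).choose_spec (g m) hfix x hx
  have hm : n + (m - n) = m := by omega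
  have hW1 : W g (m - n + 1) n = Wm g (m - n) n (g m) := by
    rw [W_succ_eq_Wm g (m - n) n, hm]
  constructor
  · calc W g (m - n + 1) n x = Wm g (m - n) n (g m) x := by rw [hW1]
      _ = Wm g' (m - n) n (g m) x := by rw [hWmc]
      _ = W g' (m - n) n x := hspec.1
      _ = W g (m - n) n x := by rw [hWc]
  · calc (W g (m - n + 1) n)⁻¹ x = (Wm g (m - n) n (g m))⁻¹ x := by rw [hW1]
      _ = (Wm g' (m - n) n (g m))⁻¹ x := by rw [hWmc]
      _ = (W g' (m - n) n)⁻¹ x := hspec.2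
      _ = (W g (m - n) n)⁻¹ x := by rw [hWc]

lemma stable {pick : Finset M → (M ≃[L] M)} {B : ℕ → Finset M} {enc : M → ℕ}
    (hpick : ∀ F : Finset M, ∀ x ∈ F, pick F x = x)
    (hB : ∀ (x : M) (m : ℕ), x ∈ B m ↔ enc x < m) (n : ℕ) (x : M) :
    ∀ d, enc x + 1 ≤ d →
      W (seq pick B) d n x = W (seq pick B) (enc x + 1) n x ∧
      (W (seq pick B) d n)⁻¹ x = (W (seq pick B) (enc x + 1) n)⁻¹ x := by
  intro d
  induction d with
  | zero => intro hd; omega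
  | succ d ih =>
    intro hd
    by_cases hcase : enc x + 1 ≤ d
    · have hxB : x ∈ B (n + d) := (hB x (n + d)).2 (by omega)
      have hstep := stage hpick (n + d) n (by omega) x hxB
      have hdn : n + d - n = d := by omega
      rw [hdn] at hstep
      exact ⟨hstep.1.trans (ih hcase).1, hstep.2.trans (ih hcase).2⟩
    · have hdx : d + 1 = enc x + 1 := by omega
      rw [hdx]
      exact ⟨rfl, rfl⟩

variable (pick : Finset M → (M ≃[L] M)) (B : ℕ → Finset M) (enc : M → ℕ)

/-- Limit value function. -/
noncomputable def sFun (n : ℕ) (x : M) : M := W (seq pick B) (enc x + 1) n x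

/-- Limit inverse value function. -/
noncomputable def sInv (n : ℕ) (x : M) : M := (W (seq pick B) (enc x + 1) n)⁻¹ x

variable {pick B enc}

lemma sFun_agree (hpick : ∀ F : Finset M, ∀ x ∈ F, pick F x = x)
    (hB : ∀ (x : M) (m : ℕ), x ∈ B m ↔ enc x < m) (n : ℕ) (x : M) (d : ℕ)
    (hd : enc x + 1 ≤ d) :
    W (seq pick B) d n x = sFun pick B enc n x :=
  (stable hpick hB n x d hd).1

lemma sInv_agree (hpick : ∀ F : Finset M, ∀ x ∈ F, pick F x = x)
    (hB : ∀ (x : M) (m : ℕ), x ∈ B m ↔ enc x < m) (n : ℕ) (x : M) (d : ℕ)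
    (hd : enc x + 1 ≤ d) :
    (W (seq pick B) d n)⁻¹ x = sInv pick B enc n x :=
  (stable hpick hB n x d hd).2

variable (pick B enc)

/-- The limit automorphism at level `n`. -/
noncomputable def sAut (hpick : ∀ F : Finset M, ∀ x ∈ F, pick F x = x)
    (hB : ∀ (x : M) (m : ℕ), x ∈ B m ↔ enc x < m) (n : ℕ) : M ≃[L] M where
  toFun := sFun pick B enc n
  invFun := sInv pick B enc n
  left_inv := by
    intro x
    have key : ∀ d, enc x + 1 ≤ d → enc (sFun pick B enc n x) + 1 ≤ d →
        sInv pick B enc n (sFun pick B enc n x) = x := by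
      intro d h1 h2
      rw [← sInv_agree hpick hB n (sFun pick B enc n x) d h2,
        ← sFun_agree hpick hB n x d h1, inv_apply_apply]
    exact key (max (enc x + 1) (enc (sFun pick B enc n x) + 1))
      (le_max_left _ _) (le_max_right _ _)
  right_inv := by
    intro x
    have key : ∀ d, enc x + 1 ≤ d → enc (sInv pick B enc n x) + 1 ≤ d →
        sFun pick B enc n (sInv pick B enc n x) = x := by
      intro d h1 h2
      rw [← sFun_agree hpick hB n (sInv pick B enc n x) d h2,
        ← sInv_agree hpick hB n x d h1, apply_inv_apply]
    exact key (max (enc x + 1) (enc (sInv pick B enc n x) + 1))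
      (le_max_left _ _) (le_max_right _ _)
  map_fun' := by
    intro k f xs
    show sFun pick B enc n (Structure.funMap f xs) = Structure.funMap f (sFun pick B enc n ∘ xs)
    have key : ∀ d, enc (Structure.funMap f xs) + 1 ≤ d → (∀ i, enc (xs i) + 1 ≤ d) →
        sFun pick B enc n (Structure.funMap f xs)
          = Structure.funMap f (sFun pick B enc n ∘ xs) := by
      intro d h1 h2
      rw [← sFun_agree hpick hB n (Structure.funMap f xs) d h1,
        FirstOrder.Language.Equiv.map_fun]
      congr 1
      funext i
      simp only [Function.comp_apply]
      exact sFun_agree hpick hB n (xs i) d (h2 i)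
    refine key (max (enc (Structure.funMap f xs) + 1)
      ((Finset.univ : Finset (Fin k)).sup fun i => enc (xs i) + 1)) (le_max_left _ _) ?_
    intro i
    exact le_trans (Finset.le_sup (f := fun i => enc (xs i) + 1) (Finset.mem_univ i))
      (le_max_right _ _)
  map_rel' := by
    intro k r xs
    show Structure.RelMap r (sFun pick B enc n ∘ xs) ↔ Structure.RelMap r xs
    have key : ∀ d, (∀ i, enc (xs i) + 1 ≤ d) →
        (Structure.RelMap r (sFun pick B enc n ∘ xs) ↔ Structure.RelMap r xs) := by
      intro d h2
      have h1 : (sFun pick B enc n ∘ xs) = (W (seq pick B) d n) ∘ xs := by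
        funext i
        simp only [Function.comp_apply]
        exact (sFun_agree hpick hB n (xs i) d (h2 i)).symm
      rw [h1, FirstOrder.Language.Equiv.map_rel]
    exact key ((Finset.univ : Finset (Fin k)).sup fun i => enc (xs i) + 1)
      (fun i => Finset.le_sup (f := fun i => enc (xs i) + 1) (Finset.mem_univ i))

variable {pick B enc}

lemma sAut_apply (hpick : ∀ F : Finset M, ∀ x ∈ F, pick F x = x)
    (hB : ∀ (x : M) (m : ℕ), x ∈ B m ↔ enc x < m) (n : ℕ) (x : M) :
    sAut pick B enc hpick hB n x = sFun pick B enc n x := rfl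

lemma sAut_eq (hpick : ∀ F : Finset M, ∀ x ∈ F, pick F x = x)
    (hB : ∀ (x : M) (m : ℕ), x ∈ B m ↔ enc x < m) (n : ℕ) :
    sAut pick B enc hpick hB n = seq pick B n * (sAut pick B enc hpick hB (n+1)) ^ 3 := by
  apply FirstOrder.Language.Equiv.ext
  intro x
  set sF := sFun pick B enc (n+1) with hsF
  set d := max (max (enc x + 1) (enc (sF x) + 1)) (enc (sF (sF x)) + 1) with hd
  have hdx : enc x + 1 ≤ d := le_trans (le_max_left _ _) (le_max_left _ _)
  have hdx1 : enc (sF x) + 1 ≤ d := le_trans (le_max_right _ _) (le_max_left _ _)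
  have hdx2 : enc (sF (sF x)) + 1 ≤ d := le_max_right _ _
  have e0 : W (seq pick B) d (n+1) x = sF x := sFun_agree hpick hB (n+1) x d hdx
  have e1 : W (seq pick B) d (n+1) (sF x) = sF (sF x) :=
    sFun_agree hpick hB (n+1) _ d hdx1
  have e2 : W (seq pick B) d (n+1) (sF (sF x)) = sF (sF (sF x)) :=
    sFun_agree hpick hB (n+1) _ d hdx2
  have lhs : sAut pick B enc hpick hB n x = W (seq pick B) (d+1) n x := by
    rw [sAut_apply]
    exact (sFun_agree hpick hB n x (d+1) (by omega)).symm
  have rhs : (seq pick B n * (sAut pick B enc hpick hB (n+1)) ^ 3) x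
      = seq pick B n (sF (sF (sF x))) := by
    rw [mul_apply]
    congr 1
  rw [lhs, rhs]
  have wdef : W (seq pick B) (d+1) n = seq pick B n * (W (seq pick B) d (n+1)) ^ 3 := rfl
  rw [wdef, mul_apply]
  congr 1
  rw [pow3_apply, e0, e1, e2]

/-- The key contradiction: there is no homomorphism `φ` from the automorphism group of a
countable structure to `ℤ` such that every pointwise stabilizer of a finite set contains an
element with `φ`-value `1`. -/
theorem main [Countable M] (φ : (M ≃[L] M) →* Multiplicative ℤ)
    (hsup : ∀ F : Finset M, ∃ u : M ≃[L] M, (∀ x ∈ F, u x = x) ∧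
      φ u = Multiplicative.ofAdd 1) :
    False := by
  obtain ⟨enc, henc⟩ := Countable.exists_injective_nat M
  classical
  set pick : Finset M → (M ≃[L] M) := fun F => (hsup F).choose with hpickdef
  have hpick : ∀ F : Finset M, ∀ x ∈ F, pick F x = x := fun F => ((hsup F).choose_spec).1
  have hpickφ : ∀ F : Finset M, φ (pick F) = Multiplicative.ofAdd 1 :=
    fun F => ((hsup F).choose_spec).2
  set B : ℕ → Finset M := fun m => Finset.preimage (Finset.range m) enc henc.injOn with hBdef
  have hB : ∀ (x : M) (m : ℕ), x ∈ B m ↔ enc x < m := by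
    intro x m
    simp [hBdef, Finset.mem_preimage, Finset.mem_range]
  have hgφ : ∀ m, φ (seq pick B m) = Multiplicative.ofAdd 1 := by
    intro m
    rw [seq_eq]
    exact hpickφ _
  set a : ℕ → ℤ := fun n => Multiplicative.toAdd (φ (sAut pick B enc hpick hB n)) with ha
  have hrec : ∀ n, a n = 1 + 3 * a (n + 1) := by
    intro n
    have h1 : φ (sAut pick B enc hpick hB n)
        = φ (seq pick B n) * (φ (sAut pick B enc hpick hB (n+1))) ^ 3 := by
      rw [sAut_eq hpick hB n, map_mul, map_pow]
    have h2 := congrArg Multiplicative.toAdd h1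
    rw [toAdd_mul, toAdd_pow, hgφ n, toAdd_ofAdd] at h2
    rw [ha]
    simp only []
    rw [h2]
    push_cast [nsmul_eq_mul]
    ring
  have hkey : ∀ n, 2 * a 0 + 1 = 3 ^ n * (2 * a n + 1) := by
    intro n
    induction n with
    | zero => ring
    | succ n ih =>
      rw [ih, hrec n]
      ring
  set N := (2 * a 0 + 1).natAbs with hN
  have h1 := hkey N
  have h2 : (2 * a N + 1) ≠ 0 := by omega
  have h3 : N = 3 ^ N * (2 * a N + 1).natAbs := by
    have h3' := congrArg Int.natAbs h1
    rw [Int.natAbs_mul, Int.natAbs_pow] at h3'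
    norm_num at h3'
    exact h3'
  have h4 : 1 ≤ (2 * a N + 1).natAbs := Nat.one_le_iff_ne_zero.2 (Int.natAbs_ne_zero.2 h2)
  have h5 : 3 ^ N ≤ N := by
    calc 3 ^ N = 3 ^ N * 1 := by ring
      _ ≤ 3 ^ N * (2 * a N + 1).natAbs := Nat.mul_le_mul_left _ h4
      _ = N := h3.symm
  have h6 : N < 3 ^ N := Nat.lt_pow_self (by norm_num)
  omega

lemma prod_eq_one {ι : Type*} (f : ι → Multiplicative ℤ) (Lw : List (ι × Bool))
    (h : ∀ p ∈ Lw, f p.1 = 1) :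
    (Lw.map fun x => cond x.2 (f x.1) (f x.1)⁻¹).prod = 1 := by
  induction Lw with
  | nil => simp
  | cons p t ih =>
    simp only [List.map_cons, List.prod_cons]
    rw [h p (List.mem_cons_self), ih (fun q hq => h q (List.mem_cons_of_mem _ hq))]
    cases hp : p.2 <;> simp

end AutFreeAux

/-- The automorphism group of a countable structure cannot be an uncountable free group:
if `Aut(M)` is isomorphic as a group to a free group, then it is countable. -/
theorem aut_countable_of_free (L : FirstOrder.Language) (M : Type*) [L.Structure M]
    [Countable M] (ι : Type*) (e : (M ≃[L] M) ≃* FreeGroup ι) :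
    Countable (M ≃[L] M) := by
  classical
  by_cases hι : Countable ι
  · letI : DecidableEq ι := Classical.decEq ι
    have hsurj : Function.Surjective (FreeGroup.mk : List (ι × Bool) → FreeGroup ι) :=
      fun x => ⟨FreeGroup.toWord x, FreeGroup.mk_toWord⟩
    haveI : Countable (FreeGroup ι) := hsurj.countable
    exact Countable.of_equiv _ e.toEquiv.symm
  · exfalso
    letI : DecidableEq ι := Classical.decEq ι
    -- the countable family of "partial realizers"
    set D : Finset (M × M) → (M ≃[L] M) := fun R =>
      if h : ∃ d : M ≃[L] M, ∀ p ∈ R, d p.1 = p.2 then h.choose else 1 with hD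
    -- the countable set of letters used by images of the family
    set ι₀ : Set ι := ⋃ (R : Finset (M × M)),
      {i | i ∈ ((FreeGroup.toWord (e (D R))).map Prod.fst)} with hι₀
    have hι₀c : ι₀.Countable := by
      apply Set.countable_iUnion
      intro R
      exact (List.finite_toSet _).countable
    have hexj : ∃ j : ι, j ∉ ι₀ := by
      by_contra hcon
      push_neg at hcon
      have : ι₀ = Set.univ := Set.eq_univ_of_forall hcon
      rw [this, Set.countable_univ_iff] at hι₀c
      exact hι hι₀c
    obtain ⟨j, hj⟩ := hexj
    set χ : ι → Multiplicative ℤ :=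
      fun i => if i = j then Multiplicative.ofAdd (1 : ℤ) else 1 with hχ
    set φ : (M ≃[L] M) →* Multiplicative ℤ :=
      (FreeGroup.lift χ).comp e.toMonoidHom with hφ
    have hφval : ∀ u : M ≃[L] M, φ u = (FreeGroup.lift χ) (e u) := fun u => rfl
    have hφD : ∀ R : Finset (M × M), φ (D R) = 1 := by
      intro R
      rw [hφval]
      conv_lhs => rw [← FreeGroup.mk_toWord (x := e (D R))]
      rw [FreeGroup.lift_mk]
      apply AutFreeAux.prod_eq_one
      intro p hp
      have hmem : p.1 ∈ ((FreeGroup.toWord (e (D R))).map Prod.fst) :=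
        List.mem_map_of_mem hp
      have hp1 : p.1 ∈ ι₀ := Set.mem_iUnion.2 ⟨R, hmem⟩
      have : p.1 ≠ j := fun hcon => hj (hcon ▸ hp1)
      simp [hχ, this]
    have hsup : ∀ F : Finset M, ∃ u : M ≃[L] M, (∀ x ∈ F, u x = x) ∧
        φ u = Multiplicative.ofAdd 1 := by
      intro F
      set gs : M ≃[L] M := e.symm (FreeGroup.of j) with hgs
      set R : Finset (M × M) := F.image (fun x => (x, gs x)) with hR
      have hex : ∃ d : M ≃[L] M, ∀ p ∈ R, d p.1 = p.2 := by
        refine ⟨gs, ?_⟩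
        intro p hp
        rw [hR] at hp
        simp only [Finset.mem_image] at hp
        obtain ⟨x, hx, rfl⟩ := hp
        rfl
      have hDR : ∀ p ∈ R, D R p.1 = p.2 := by
        rw [hD]
        simp only []
        rw [dif_pos hex]
        exact hex.choose_spec
      refine ⟨(D R)⁻¹ * gs, ?_, ?_⟩
      · intro x hx
        have h1 : D R x = gs x := hDR (x, gs x) (by
          rw [hR]; exact Finset.mem_image_of_mem _ hx)
        rw [AutFreeAux.mul_apply, ← h1, AutFreeAux.inv_apply_apply]
      · rw [map_mul, map_inv, hφD R, inv_one, one_mul, hφval, hgs,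
          MulEquiv.apply_symm_apply, FreeGroup.lift_apply_of]
        simp [hχ]
    exact AutFreeAux.main φ hsup
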